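/- arXiv:2006.14733 — 2 statements merged into one kernel-verified Lean document; each statement's English description precedes it below -/
import Mathlib

section
/- Let G be a graph with k-burning number b_k(G) = t, and let j be the smallest positive integer such that some maximal independent set M_j of G^{2j} satisfies |M_j| ≤ k·j. Then j ≤ b_k(G), and all vertices of G can be burned within 3j ≤ 3·b_k(G) rounds of the k-burning process by first burning the vertices of M_j (k per round) and then propagating. -/
/-- The `r`-th power of a graph: distinct vertices are adjacent iff their
distance in `G` is (finite and) at most `r`. -/
def SimpleGraph.power {V : Type*} (G : SimpleGraph V) (r : ℕ) : SimpleGraph V where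
  Adj u v := u ≠ v ∧ G.Reachable u v ∧ G.dist u v ≤ r
  symm := ⟨fun u v ⟨h1, h2, h3⟩ => ⟨h1.symm, h2.symm, by rwa [SimpleGraph.dist_comm]⟩⟩
  loopless := ⟨fun v h => h.1 rfl⟩

/-- `D` is a dominating set of `H`. -/
def SimpleGraph.DomSet {V : Type*} (H : SimpleGraph V) (D : Finset V) : Prop :=
  ∀ v : V, v ∈ D ∨ ∃ u ∈ D, H.Adj u v

/-- `M` is an independent set of `H`. -/
def SimpleGraph.IndepFinset {V : Type*} (H : SimpleGraph V) (M : Finset V) : Prop :=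
  ∀ u ∈ M, ∀ v ∈ M, ¬ H.Adj u v

/-- `M` is a maximal independent set of `H`. -/
def SimpleGraph.MaxIndepFinset {V : Type*} (H : SimpleGraph V) (M : Finset V) : Prop :=
  H.IndepFinset M ∧ ∀ v, v ∉ M → ∃ u ∈ M, H.Adj u v

/-- `G` can be burned within `t` rounds of the `k`-burning process:
there are source sets `s 0, …, s (t-1)` (at most `k` sources per round,
the sources of round `i+1` being `s i`) such that every vertex is within
distance `t - 1 - i` of a source chosen at round `i + 1`. -/
def SimpleGraph.kBurnableIn {V : Type*} (G : SimpleGraph V) (k t : ℕ) : Prop :=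
  ∃ s : Fin t → Finset V, (∀ i, (s i).card ≤ k) ∧
    ∀ v : V, ∃ i : Fin t, ∃ u ∈ s i, G.Reachable u v ∧ G.dist u v ≤ t - 1 - i.val

/-- The `k`-burning number of `G`. -/
noncomputable def SimpleGraph.burningNumber {V : Type*} (G : SimpleGraph V) (k : ℕ) : ℕ :=
  sInf {t | G.kBurnableIn k t}

/-- triangle inequality for dist under reachability -/
lemma dist_triangle_reach {V : Type*} {G : SimpleGraph V} {u v w : V}
    (h1 : G.Reachable u v) (h2 : G.Reachable v w) :
    G.dist u w ≤ G.dist u v + G.dist v w := by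
  obtain ⟨p, hp⟩ := h1.exists_walk_length_eq_dist
  obtain ⟨q, hq⟩ := h2.exists_walk_length_eq_dist
  rw [← hp, ← hq, ← SimpleGraph.Walk.length_append]
  apply SimpleGraph.dist_le

/-- every finite graph has a maximal independent finset -/
lemma exists_maxIndep {V : Type*} [Fintype V] [DecidableEq V] (H : SimpleGraph V) :
    ∃ M : Finset V, H.MaxIndepFinset M := by
  classical
  set S : Finset (Finset V) := Finset.univ.filter (fun M => H.IndepFinset M) with hS
  have hne : S.Nonempty := ⟨∅, by rw [hS, Finset.mem_filter]; exact ⟨Finset.mem_univ _, by simp [SimpleGraph.IndepFinset]⟩⟩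
  obtain ⟨M, hMS, hmax⟩ := S.exists_max_image Finset.card hne
  have hIndep : H.IndepFinset M := by simpa [hS] using hMS
  refine ⟨M, hIndep, fun v hv => ?_⟩
  by_contra hcon
  push_neg at hcon
  have hIns : H.IndepFinset (insert v M) := by
    intro a ha b hb hab
    rcases Finset.mem_insert.mp ha with ha' | ha2
    · subst ha'
      rcases Finset.mem_insert.mp hb with hb' | hb2
      · subst hb'; exact H.loopless.irrefl _ hab
      · exact hcon b hb2 hab.symm
    · rcases Finset.mem_insert.mp hb with hb' | hb2
      · subst hb'; exact hcon a ha2 hab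
      · exact hIndep a ha2 b hb2 hab
  have := hmax (insert v M) (by simp [hS, hIns])
  rw [Finset.card_insert_of_notMem hv] at this
  omega

/-- a finset of size ≤ k*j can be split into j pieces of size ≤ k -/
lemma split_finset {V : Type*} [DecidableEq V] (k : ℕ) :
    ∀ (j : ℕ) (S : Finset V), S.card ≤ k * j →
      ∃ s : Fin j → Finset V, (∀ i, (s i).card ≤ k) ∧ ∀ v ∈ S, ∃ i, v ∈ s i := by
  intro j
  induction j with
  | zero =>
    intro S hS
    refine ⟨Fin.elim0, fun i => i.elim0, fun v hv => ?_⟩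
    have : S = ∅ := Finset.card_eq_zero.mp (by omega)
    simp [this] at hv
  | succ n ih =>
    intro S hS
    obtain ⟨T, hTS, hTcard⟩ := Finset.exists_subset_card_eq (s := S) (n := min k S.card) (min_le_right _ _)
    have hdiff : (S \ T).card ≤ k * n := by
      rw [Finset.card_sdiff_of_subset hTS, hTcard]
      have hms := Nat.mul_succ k n
      rcases le_total k S.card with h | h
      · rw [min_eq_left h]; rw [Nat.mul_succ] at hS; omega
      · rw [min_eq_right h]; omega
    obtain ⟨s', hs'card, hs'cov⟩ := ih (S \ T) hdiff
    refine ⟨Fin.cons T s', fun i => ?_, fun v hv => ?_⟩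
    · refine Fin.cases ?_ ?_ i
      · simpa [hTcard] using min_le_left k S.card
      · intro i'; simpa using hs'card i'
    · by_cases hvT : v ∈ T
      · exact ⟨0, by simpa using hvT⟩
      · obtain ⟨i', hi'⟩ := hs'cov v (Finset.mem_sdiff.mpr ⟨hv, hvT⟩)
        exact ⟨i'.succ, by simpa using hi'⟩

/-- if `j` is the smallest positive integer admitting a maximal
independent set `M` of `G^{2j}` with `|M| ≤ k·j`, then `j ≤ b_k(G)` and `G` can
be `k`-burned within `3j ≤ 3 b_k(G)` rounds. -/
theorem stmt8 {V : Type*} [Fintype V] [DecidableEq V] [Nonempty V] (G : SimpleGraph V)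
    (k : ℕ) (hk : 0 < k) (j : ℕ) (hj : 0 < j)
    (M : Finset V) (hM : (G.power (2 * j)).MaxIndepFinset M) (hMcard : M.card ≤ k * j)
    (hmin : ∀ j', 0 < j' → j' < j → ∀ M' : Finset V,
      (G.power (2 * j')).MaxIndepFinset M' → k * j' < M'.card) :
    j ≤ G.burningNumber k ∧ G.kBurnableIn k (3 * j) ∧
      3 * j ≤ 3 * G.burningNumber k := by
  classical
  -- Part 2: burnable in 3j rounds
  have hburn : G.kBurnableIn k (3 * j) := by
    obtain ⟨s', hs'card, hs'cov⟩ := split_finset k j M hMcard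
    refine ⟨fun i => if h : i.val < j then s' ⟨i.val, h⟩ else ∅, fun i => ?_, fun v => ?_⟩
    · by_cases h : i.val < j
      · simpa [h] using hs'card ⟨i.val, h⟩
      · simp [h]
    · -- find u ∈ M with reachable and dist ≤ 2j
      have hex : ∃ u ∈ M, G.Reachable u v ∧ G.dist u v ≤ 2 * j := by
        by_cases hvM : v ∈ M
        · exact ⟨v, hvM, SimpleGraph.Reachable.refl v, by simp [SimpleGraph.dist_self]⟩
        · obtain ⟨u, huM, hadj⟩ := hM.2 v hvM
          have hadj' : u ≠ v ∧ G.Reachable u v ∧ G.dist u v ≤ 2 * j := hadj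
          exact ⟨u, huM, hadj'.2.1, hadj'.2.2⟩
      obtain ⟨u, huM, hreach, hdist⟩ := hex
      obtain ⟨i0, hi0⟩ := hs'cov u huM
      have hi0lt : (i0 : ℕ) < j := i0.isLt
      refine ⟨⟨i0.val, by omega⟩, u, ?_, hreach, ?_⟩
      · simp only [hi0lt, dif_pos]
        exact hi0
      · show G.dist u v ≤ 3 * j - 1 - i0.val
        omega
  -- the burnable set is nonempty
  have hne : {t | G.kBurnableIn k t}.Nonempty := by
    refine ⟨Fintype.card V, ?_⟩
    have e := Fintype.equivFin V
    refine ⟨fun i => {e.symm i}, fun i => by simp; omega, fun v => ?_⟩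
    refine ⟨e v, v, by simp, SimpleGraph.Reachable.refl v, by simp [SimpleGraph.dist_self]⟩
  have hb_mem : G.kBurnableIn k (G.burningNumber k) := Nat.sInf_mem hne
  -- burning number is positive
  have hbpos : 0 < G.burningNumber k := by
    rcases Nat.eq_zero_or_pos (G.burningNumber k) with h0 | h
    · exfalso
      rw [h0] at hb_mem
      obtain ⟨s, _, hcov⟩ := hb_mem
      obtain ⟨i, _⟩ := hcov (Classical.arbitrary V)
      exact absurd i.isLt (by omega)
    · exact h
  -- Part 1: j ≤ burningNumber
  have hjle : j ≤ G.burningNumber k := by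
    by_contra hcon
    push_neg at hcon
    set b := G.burningNumber k with hb
    obtain ⟨s, hscard, hscov⟩ := hb_mem
    set D : Finset V := (Finset.univ : Finset (Fin b)).biUnion s with hD
    have hDcard : D.card ≤ k * b := by
      calc D.card ≤ ∑ i : Fin b, (s i).card := Finset.card_biUnion_le
        _ ≤ ∑ _i : Fin b, k := Finset.sum_le_sum (fun i _ => hscard i)
        _ = b * k := by simp [Finset.sum_const, mul_comm]
        _ = k * b := mul_comm b k
    obtain ⟨M', hM'⟩ := exists_maxIndep (G.power (2 * b))
    have hlt := hmin b hbpos hcon M' hM'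
    -- every vertex has a dominator in D within distance b - 1
    have hdom : ∀ m : V, ∃ u, u ∈ D ∧ G.Reachable u m ∧ G.dist u m ≤ b - 1 := by
      intro m
      obtain ⟨i, u, hu, hreach, hdist⟩ := hscov m
      refine ⟨u, Finset.mem_biUnion.mpr ⟨i, Finset.mem_univ i, hu⟩, hreach, ?_⟩
      omega
    choose f hfD hfreach hfdist using hdom
    have hinj : Set.InjOn f ↑M' := by
      intro m1 hm1 m2 hm2 hfeq
      by_contra hne'
      apply hM'.1 m1 (by exact_mod_cast hm1) m2 (by exact_mod_cast hm2)
      have h2r : G.Reachable (f m1) m2 := by rw [hfeq]; exact hfreach m2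
      show m1 ≠ m2 ∧ G.Reachable m1 m2 ∧ G.dist m1 m2 ≤ 2 * b
      refine ⟨hne', (hfreach m1).symm.trans h2r, ?_⟩
      have h1 : G.dist m1 (f m1) ≤ b - 1 := by rw [SimpleGraph.dist_comm]; exact hfdist m1
      rw [hfeq] at h1
      have h2 : G.dist (f m2) m2 ≤ b - 1 := hfdist m2
      have htri : G.dist m1 m2 ≤ G.dist m1 (f m1) + G.dist (f m1) m2 :=
        dist_triangle_reach (hfreach m1).symm h2r
      rw [hfeq] at htri
      omega
    have hcard : M'.card ≤ D.card := by
      have := Finset.card_le_card_of_injOn f (fun m hm => hfD m) hinj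
      exact this
    omega
  exact ⟨hjle, hburn, by omega⟩
end

section
/- If G is a path on n vertices, then the k-burning number of G is exactly ⌈√(n/k)⌉, i.e., b_k(G) = ⌈√(n/k)⌉. -/
open Finset

-- walk of given length along the path
lemma path_walk (n : ℕ) : ∀ d (u v : Fin n), u.val + d = v.val →
    ∃ w : (SimpleGraph.pathGraph n).Walk u v, w.length = d := by
  intro d
  induction d with
  | zero =>
    intro u v h
    have : u = v := Fin.ext (by omega)
    subst this; exact ⟨.nil, rfl⟩
  | succ d ih =>
    intro u v h
    have hlt : u.val + 1 < n := by have := v.isLt; omega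
    set u' : Fin n := ⟨u.val + 1, hlt⟩ with hu'
    have hadj : (SimpleGraph.pathGraph n).Adj u u' :=
      SimpleGraph.pathGraph_adj.2 (Or.inl rfl)
    obtain ⟨w, hw⟩ := ih u' v (by simp [hu']; omega)
    exact ⟨.cons hadj w, by simp [hw]⟩

lemma path_walk_ge {n : ℕ} {u v : Fin n} (w : (SimpleGraph.pathGraph n).Walk u v) :
    Nat.dist u.val v.val ≤ w.length := by
  induction w with
  | nil => simp
  | @cons a b c h p ih =>
    have hab : Nat.dist a.val b.val ≤ 1 := by
      rcases SimpleGraph.pathGraph_adj.1 h with h1 | h1 <;> simp [Nat.dist] <;> omega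
    calc Nat.dist a.val c.val ≤ Nat.dist a.val b.val + Nat.dist b.val c.val :=
          Nat.dist.triangle_inequality _ _ _
      _ ≤ 1 + p.length := by omega
      _ = (SimpleGraph.Walk.cons h p).length := by simp [Nat.add_comm]

lemma pathGraph_reachable {n : ℕ} (u v : Fin n) :
    (SimpleGraph.pathGraph n).Reachable u v :=
  SimpleGraph.pathGraph_preconnected n u v

lemma pathGraph_dist {n : ℕ} (u v : Fin n) :
    (SimpleGraph.pathGraph n).dist u v = Nat.dist u.val v.val := by
  apply le_antisymm
  · rcases le_total u.val v.val with h | h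
    · obtain ⟨w, hw⟩ := path_walk n (v.val - u.val) u v (by omega)
      have := SimpleGraph.dist_le w
      rw [hw] at this
      have hd : Nat.dist u.val v.val = v.val - u.val := by simp [Nat.dist]; omega
      omega
    · obtain ⟨w, hw⟩ := path_walk n (u.val - v.val) v u (by omega)
      have := SimpleGraph.dist_le w.reverse
      rw [SimpleGraph.Walk.length_reverse, hw] at this
      have hd : Nat.dist u.val v.val = u.val - v.val := by simp [Nat.dist]; omega
      omega
  · obtain ⟨w, hw⟩ := (pathGraph_reachable u v).exists_walk_length_eq_dist
    rw [← hw]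
    exact path_walk_ge w

lemma sum_odd (t : ℕ) : ∑ j ∈ range t, (2*j+1) = t^2 := by
  induction t with
  | zero => simp
  | succ t ih => rw [Finset.sum_range_succ, ih]; ring

lemma sum_refl (t : ℕ) : ∑ i ∈ range t, (2*(t-1-i)+1) = t^2 := by
  rw [← sum_odd t]
  exact Finset.sum_range_reflect (fun j => 2*j+1) t

lemma ball_card (n c r : ℕ) :
    (Finset.univ.filter (fun v : Fin n => Nat.dist c v.val ≤ r)).card ≤ 2*r+1 := by
  have h1 : (Finset.univ.filter (fun v : Fin n => Nat.dist c v.val ≤ r)).card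
      ≤ (Finset.Icc (c-r) (c+r)).card := by
    apply Finset.card_le_card_of_injOn Fin.val
    · intro v hv
      simp only [Finset.coe_filter, Finset.mem_filter, Finset.mem_univ, true_and, Set.mem_setOf_eq] at hv
      simp only [Finset.coe_Icc, Finset.mem_coe, Finset.mem_Icc, Set.mem_Icc]
      simp [Nat.dist] at hv; omega
    · exact Fin.val_injective.injOn
  rw [Nat.card_Icc] at h1
  omega

lemma burn_count {n k t : ℕ} (h : (SimpleGraph.pathGraph n).kBurnableIn k t) :
    n ≤ k * t^2 := by
  classical
  obtain ⟨s, hcard, hcov⟩ := h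
  have hsub : (Finset.univ : Finset (Fin n)) ⊆
      Finset.univ.biUnion (fun i : Fin t => (s i).biUnion
        (fun u => Finset.univ.filter (fun v : Fin n => Nat.dist u.val v.val ≤ t-1-i.val))) := by
    intro v _
    obtain ⟨i, u, hu, _, hd⟩ := hcov v
    rw [pathGraph_dist] at hd
    simp only [Finset.mem_biUnion, Finset.mem_filter, Finset.mem_univ, true_and]
    exact ⟨i, u, hu, hd⟩
  have h1 := Finset.card_le_card hsub
  rw [Finset.card_univ, Fintype.card_fin] at h1
  have h2 : (Finset.univ.biUnion (fun i : Fin t => (s i).biUnion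
      (fun u => Finset.univ.filter (fun v : Fin n => Nat.dist u.val v.val ≤ t-1-i.val)))).card
      ≤ ∑ i : Fin t, k * (2*(t-1-i.val)+1) := by
    refine Finset.card_biUnion_le.trans (Finset.sum_le_sum fun i _ => ?_)
    refine Finset.card_biUnion_le.trans ?_
    calc ∑ u ∈ s i, (Finset.univ.filter
          (fun v : Fin n => Nat.dist u.val v.val ≤ t-1-i.val)).card
        ≤ ∑ _u ∈ s i, (2*(t-1-i.val)+1) :=
          Finset.sum_le_sum fun u _ => ball_card n u.val _
      _ = (s i).card * (2*(t-1-i.val)+1) := by rw [Finset.sum_const, smul_eq_mul]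
      _ ≤ k * (2*(t-1-i.val)+1) := Nat.mul_le_mul_right _ (hcard i)
  have h3 : ∑ i : Fin t, k * (2*(t-1-i.val)+1) = k * t^2 := by
    rw [Fin.sum_univ_eq_sum_range (fun i => k * (2*(t-1-i)+1)) t, ← Finset.mul_sum, sum_refl]
  omega

lemma burn_construct {n k t : ℕ} (hk : 0 < k) (hn : 0 < n) (h : n ≤ k * t^2) :
    (SimpleGraph.pathGraph n).kBurnableIn k t := by
  classical
  set L : ℕ → ℕ := fun m => 2*(t - 1 - m / k) + 1 with hL
  set P : ℕ → ℕ := fun m => ∑ m' ∈ Finset.range m, L m' with hPdef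
  have hPsucc : ∀ m, P (m+1) = P m + L m := fun m => Finset.sum_range_succ L m
  have hPadd : ∀ a b, P (a+b) = P a + ∑ j ∈ range b, L (a+j) := by
    intro a b
    rw [hPdef]
    simp only [Finset.range_eq_Ico]
    rw [← Finset.sum_Ico_consecutive L (Nat.zero_le a) (Nat.le_add_right a b),
      Finset.sum_Ico_eq_sum_range]
    rw [Finset.sum_Ico_eq_sum_range]
    simp
  have hgroup : ∀ i, i ≤ t → P (k*i) = ∑ i' ∈ range i, k*(2*(t-1-i')+1) := by
    intro i
    induction i with
    | zero => intro _; simp [hPdef]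
    | succ i ih =>
      intro hit
      have hki : k*(i+1) = k*i + k := by ring
      rw [hki, hPadd, ih (by omega), Finset.sum_range_succ]
      congr 1
      have : ∀ j ∈ range k, L (k*i+j) = 2*(t-1-i)+1 := by
        intro j hj
        simp only [Finset.mem_range] at hj
        have hdiv : (k*i+j)/k = i := by
          rw [Nat.mul_add_div hk, Nat.div_eq_of_lt hj]; omega
        simp [hL, hdiv]
      rw [Finset.sum_congr rfl this, Finset.sum_const, Finset.card_range, smul_eq_mul]
  have hPtot : P (k*t) = k * t^2 := by
    rw [hgroup t le_rfl, ← Finset.mul_sum, sum_refl]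
  have hcover : ∀ N v, v < P N → ∃ m < N, P m ≤ v ∧ v < P (m+1) := by
    intro N
    induction N with
    | zero => intro v hv; simp [hPdef] at hv
    | succ N ih =>
      intro v hv
      by_cases h' : v < P N
      · obtain ⟨m, hm1, hm2, hm3⟩ := ih v h'
        exact ⟨m, by omega, hm2, hm3⟩
      · exact ⟨N, by omega, by omega, hv⟩
  refine ⟨fun i => (Finset.range k).image
    (fun j => (⟨min (P (k*i.val + j) + (t-1-i.val)) (n-1), by omega⟩ : Fin n)), ?_, ?_⟩
  · intro i
    exact (Finset.card_image_le).trans (by simp)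
  · intro v
    obtain ⟨m, hm, h1, h2⟩ := hcover (k*t) v.val (by have := v.isLt; omega)
    have hik : m / k < t := by
      rw [Nat.div_lt_iff_lt_mul hk, Nat.mul_comm]; omega
    refine ⟨⟨m/k, hik⟩, ⟨min (P (k*(m/k) + m % k) + (t-1-m/k)) (n-1), by omega⟩, ?_, ?_, ?_⟩
    · exact Finset.mem_image.2 ⟨m % k, Finset.mem_range.2 (Nat.mod_lt _ hk), rfl⟩
    · exact pathGraph_reachable _ _
    · rw [pathGraph_dist]
      have hdm : k*(m/k) + m % k = m := Nat.div_add_mod m k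
      simp only [hdm, Fin.val_mk]
      have h2' : v.val < P m + (2*(t-1-m/k)+1) := by
        have h3 := hPsucc m
        simp only [hL] at h3
        omega
      have hv : v.val ≤ n - 1 := by have := v.isLt; omega
      simp only [Nat.dist]
      omega

/-- the `k`-burning number of the path on `n` vertices is exactly
`⌈√(n/k)⌉`. -/
theorem stmt11 (n k : ℕ) (hk : 0 < k) :
    (SimpleGraph.pathGraph n).burningNumber k = ⌈Real.sqrt ((n : ℝ) / (k : ℝ))⌉₊ := by
  have key : ∀ t : ℕ, (⌈Real.sqrt ((n : ℝ) / (k : ℝ))⌉₊ ≤ t ↔ n ≤ k * t^2) := by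
    intro t
    rw [Nat.ceil_le, Real.sqrt_le_left (Nat.cast_nonneg t), div_le_iff₀ (by positivity)]
    rw [show ((t:ℝ)^2 * k) = ((k * t^2 : ℕ) : ℝ) by push_cast; ring, Nat.cast_le]
  rcases Nat.eq_zero_or_pos n with hn | hn
  · subst hn
    have h0 : (SimpleGraph.pathGraph 0).kBurnableIn k 0 :=
      ⟨fun _ => ∅, fun i => by simp, fun v => v.elim0⟩
    have hz : (SimpleGraph.pathGraph 0).burningNumber k = 0 :=
      Nat.sInf_eq_zero.2 (Or.inl h0)
    rw [hz]
    simp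
  · have hT1 : (SimpleGraph.pathGraph n).kBurnableIn k ⌈Real.sqrt ((n : ℝ) / (k : ℝ))⌉₊ :=
      burn_construct hk hn ((key _).1 le_rfl)
    apply le_antisymm
    · exact Nat.sInf_le hT1
    · exact le_csInf ⟨_, hT1⟩ fun t ht => (key t).2 (burn_count ht)
end
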